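/- Let α, β, γ ∈ ℝ, let m be the matrix [[γ, β],[−α, −γ]], and write exp(tm) = [[a_t, b_t],[c_t, d_t]] for t ∈ ℝ. Let ħ > 0, let ξ ∈ ℝ, and let I ⊆ ℝ be an open interval containing 0 on which a_t > 0. Then the function u(t,x) := a_t^{−1/2} · exp( (i/ħ) · (1/(2a_t)) · (c_t·x² + 2xξ − b_t·ξ²) ) satisfies u(0,x) = e^{ixξ/ħ} for all x ∈ ℝ, and solves the Schrödinger equation iħ·∂_t u(t,x) = (α/2)·x²·u(t,x) − iħγ·( x·∂_x u(t,x) + u(t,x)/2 ) − (ħ²β/2)·∂²_{xx} u(t,x) for all t ∈ I and x ∈ ℝ. -/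

import Mathlib

set_option maxHeartbeats 2000000

open Real Complex Matrix

noncomputable section

lemma hasDerivAt_exp_entry (m : Matrix (Fin 2) (Fin 2) ℝ) (t : ℝ) (i j : Fin 2) :
    HasDerivAt (fun t' : ℝ => NormedSpace.exp (t' • m) i j)
      ((m * NormedSpace.exp (t • m)) i j) t := by
  letI : SeminormedRing (Matrix (Fin 2) (Fin 2) ℝ) := Matrix.linftyOpSemiNormedRing
  letI : NormedRing (Matrix (Fin 2) (Fin 2) ℝ) := Matrix.linftyOpNormedRing
  letI : NormedAlgebra ℝ (Matrix (Fin 2) (Fin 2) ℝ) := Matrix.linftyOpNormedAlgebra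
  have h := hasDerivAt_exp_smul_const' (𝕂 := ℝ) m t
  have hL := (LinearMap.toContinuousLinearMap
      (Matrix.entryLinearMap ℝ ℝ i j)).hasFDerivAt
      (x := NormedSpace.exp (t • m))
  exact hL.comp_hasDerivAt t h

lemma exp_zero_entry (m : Matrix (Fin 2) (Fin 2) ℝ) (i j : Fin 2) :
    NormedSpace.exp ((0:ℝ) • m) i j = if i = j then 1 else 0 := by
  rw [zero_smul, NormedSpace.exp_zero]
  simp [Matrix.one_apply]

lemma mul_exp_entries (m : Matrix (Fin 2) (Fin 2) ℝ) (t : ℝ) (i j : Fin 2) :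
    (m * NormedSpace.exp (t • m)) i j =
      m i 0 * NormedSpace.exp (t • m) 0 j + m i 1 * NormedSpace.exp (t • m) 1 j := by
  rw [Matrix.mul_apply, Fin.sum_univ_two]

lemma det_rel (α β γ : ℝ) (m : Matrix (Fin 2) (Fin 2) ℝ) (hm : m = !![γ, β; -α, -γ]) (t : ℝ) :
    NormedSpace.exp (t • m) 0 0 * NormedSpace.exp (t • m) 1 1 -
      NormedSpace.exp (t • m) 0 1 * NormedSpace.exp (t • m) 1 0 = 1 := by
  set f : ℝ → ℝ := fun t' => NormedSpace.exp (t' • m) 0 0 * NormedSpace.exp (t' • m) 1 1 -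
      NormedSpace.exp (t' • m) 0 1 * NormedSpace.exp (t' • m) 1 0 with hf
  have key : ∀ s : ℝ, HasDerivAt f 0 s := by
    intro s
    have h00 := hasDerivAt_exp_entry m s 0 0
    have h01 := hasDerivAt_exp_entry m s 0 1
    have h10 := hasDerivAt_exp_entry m s 1 0
    have h11 := hasDerivAt_exp_entry m s 1 1
    have h := (h00.mul h11).sub (h01.mul h10)
    refine h.congr_deriv ?_
    rw [mul_exp_entries m, mul_exp_entries m, mul_exp_entries m, mul_exp_entries m]
    simp only [hm]
    simp [Matrix.cons_val_zero, Matrix.cons_val_one]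
    ring
  have hconst : f t = f 0 :=
    is_const_of_deriv_eq_zero (fun s => (key s).differentiableAt)
      (fun s => (key s).deriv) t 0
  have : f t = 1 := by
    rw [hconst]
    show NormedSpace.exp ((0:ℝ) • m) 0 0 * NormedSpace.exp ((0:ℝ) • m) 1 1 -
      NormedSpace.exp ((0:ℝ) • m) 0 1 * NormedSpace.exp ((0:ℝ) • m) 1 0 = 1
    simp only [exp_zero_entry]
    norm_num
  exact this

lemma aux_hasDerivAt_quad (k2 k1 k0 : ℂ) (x : ℝ) :
    HasDerivAt (fun y : ℝ => k2 * (y:ℂ)^2 + k1 * (y:ℂ) + k0) (2*k2*(x:ℂ) + k1) x := by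
  have hid : HasDerivAt (fun y : ℝ => ((y:ℝ):ℂ)) 1 x := by
    simpa using (hasDerivAt_id x).ofReal_comp
  have h := ((((hid.mul hid).const_mul k2).add (hid.const_mul k1)).add_const k0)
  have hfe : (fun y : ℝ => k2 * (y:ℂ)^2 + k1 * (y:ℂ) + k0)
      = (fun y : ℝ => k2 * ((y:ℂ) * (y:ℂ)) + k1 * (y:ℂ) + k0) := by
    funext y; ring
  rw [hfe]
  refine h.congr_deriv ?_
  ring

lemma hasDerivAt_quadExp (c0 k2 k1 k0 : ℂ) (x : ℝ) :
    HasDerivAt (fun y : ℝ => c0 * Complex.exp (k2*(y:ℂ)^2 + k1*(y:ℂ) + k0))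
      (c0 * Complex.exp (k2*(x:ℂ)^2 + k1*(x:ℂ) + k0) * (2*k2*(x:ℂ) + k1)) x := by
  have h := ((aux_hasDerivAt_quad k2 k1 k0 x).cexp).const_mul c0
  refine h.congr_deriv ?_; ring

lemma hasDerivAt_quadExp' (c0 k2 k1 k0 : ℂ) (x : ℝ) :
    HasDerivAt (fun y : ℝ => c0 * Complex.exp (k2*(y:ℂ)^2 + k1*(y:ℂ) + k0) * (2*k2*(y:ℂ) + k1))
      (c0 * Complex.exp (k2*(x:ℂ)^2 + k1*(x:ℂ) + k0) * ((2*k2*(x:ℂ)+k1)^2 + 2*k2)) x := by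
  have h1 := hasDerivAt_quadExp c0 k2 k1 k0 x
  have hid : HasDerivAt (fun y : ℝ => ((y:ℝ):ℂ)) 1 x := by
    simpa using (hasDerivAt_id x).ofReal_comp
  have h2 := (hid.const_mul (2*k2)).add_const k1
  refine (h1.mul h2).congr_deriv ?_; ring

lemma deriv_quadExp (c0 k2 k1 k0 : ℂ) :
    deriv (fun y : ℝ => c0 * Complex.exp (k2*(y:ℂ)^2 + k1*(y:ℂ) + k0)) =
      fun x : ℝ => c0 * Complex.exp (k2*(x:ℂ)^2 + k1*(x:ℂ) + k0) * (2*k2*(x:ℂ) + k1) :=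
  funext fun x => (hasDerivAt_quadExp c0 k2 k1 k0 x).deriv

lemma deriv2_quadExp (c0 k2 k1 k0 : ℂ) (x : ℝ) :
    deriv (deriv (fun y : ℝ => c0 * Complex.exp (k2*(y:ℂ)^2 + k1*(y:ℂ) + k0))) x =
      c0 * Complex.exp (k2*(x:ℂ)^2 + k1*(x:ℂ) + k0) * ((2*k2*(x:ℂ)+k1)^2 + 2*k2) := by
  rw [deriv_quadExp]
  exact (hasDerivAt_quadExp' c0 k2 k1 k0 x).deriv

/-- the explicit quadratic-phase function solves the Schrödinger
equation of the Weyl-quantized quadratic Hamiltonian. -/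
theorem quadratic_hamiltonian_propagator (α β γ : ℝ) (hb : ℝ) (hhb : 0 < hb) (ξ : ℝ)
    (m : Matrix (Fin 2) (Fin 2) ℝ) (hm : m = !![γ, β; -α, -γ])
    (r s : ℝ) (hr : r < 0) (hs : 0 < s)
    (apos : ∀ t ∈ Set.Ioo r s, 0 < NormedSpace.exp (t • m) 0 0)
    (u : ℝ → ℝ → ℂ)
    (hu : ∀ t x : ℝ,
      u t x = (((Real.sqrt (NormedSpace.exp (t • m) 0 0))⁻¹ : ℝ) : ℂ) *
        Complex.exp ((Complex.I / (hb : ℂ)) *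
          ((1 : ℂ) / (2 * ((NormedSpace.exp (t • m) 0 0 : ℝ) : ℂ))) *
          (((NormedSpace.exp (t • m) 1 0 : ℝ) : ℂ) * (x : ℂ) ^ 2 +
            2 * (x : ℂ) * (ξ : ℂ) -
            ((NormedSpace.exp (t • m) 0 1 : ℝ) : ℂ) * (ξ : ℂ) ^ 2))) :
    (∀ x : ℝ, u 0 x = Complex.exp (Complex.I * (x : ℂ) * (ξ : ℂ) / (hb : ℂ))) ∧
    ∀ t ∈ Set.Ioo r s, ∀ x : ℝ,
      Complex.I * (hb : ℂ) * deriv (fun t' : ℝ => u t' x) t =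
        ((α / 2 : ℝ) : ℂ) * (x : ℂ) ^ 2 * u t x -
          Complex.I * (hb : ℂ) * (γ : ℂ) *
            ((x : ℂ) * deriv (fun y : ℝ => u t y) x + u t x / 2) -
          ((hb ^ 2 * β / 2 : ℝ) : ℂ) * deriv (deriv (fun y : ℝ => u t y)) x := by
  have hbC : (hb : ℂ) ≠ 0 := Complex.ofReal_ne_zero.mpr hhb.ne'
  constructor
  · intro x
    rw [hu 0 x]
    rw [show Real.sqrt (NormedSpace.exp ((0:ℝ) • m) 0 0) = 1 by
      rw [exp_zero_entry]; norm_num]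
    rw [show NormedSpace.exp ((0:ℝ) • m) 1 0 = 0 by rw [exp_zero_entry]; norm_num]
    rw [show NormedSpace.exp ((0:ℝ) • m) 0 1 = 0 by rw [exp_zero_entry]; norm_num]
    rw [show NormedSpace.exp ((0:ℝ) • m) 0 0 = 1 by rw [exp_zero_entry]; norm_num]
    norm_num
    congr 1
    field_simp
  · intro t ht x
    have ha0 : 0 < NormedSpace.exp (t • m) 0 0 := apos t ht
    set a : ℝ := NormedSpace.exp (t • m) 0 0 with haA
    set bb : ℝ := NormedSpace.exp (t • m) 0 1 with hbA
    set c : ℝ := NormedSpace.exp (t • m) 1 0 with hcA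
    set d : ℝ := NormedSpace.exp (t • m) 1 1 with hdA
    have hsqpos : 0 < Real.sqrt a := Real.sqrt_pos.mpr ha0
    have hsqne : Real.sqrt a ≠ 0 := hsqpos.ne'
    have hAne : (a : ℂ) ≠ 0 := Complex.ofReal_ne_zero.mpr ha0.ne'
    -- complex constants
    set K : ℂ := (Complex.I / (hb:ℂ)) * ((1:ℂ) / (2*(a:ℂ))) with hK
    set c0 : ℂ := (((Real.sqrt a)⁻¹ : ℝ) : ℂ) with hc0
    set k2 : ℂ := K * (c:ℂ) with hk2
    set k1 : ℂ := K * (2*(ξ:ℂ)) with hk1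
    set k0 : ℂ := K * (-(bb:ℂ)*(ξ:ℂ)^2) with hk0
    -- x-direction function equality
    have hx_eq : (fun y : ℝ => u t y)
        = fun y : ℝ => c0 * Complex.exp (k2*(y:ℂ)^2 + k1*(y:ℂ) + k0) := by
      funext y
      rw [hu t y]
      change _ * Complex.exp ((Complex.I / (hb : ℂ)) * ((1 : ℂ) / (2 * (a : ℂ))) * ((c : ℂ) * (y : ℂ) ^ 2 + 2 * (y : ℂ) * (ξ : ℂ) - (bb : ℂ) * (ξ : ℂ) ^ 2)) = _
      congr 1
      rw [hk2, hk1, hk0, hK]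
      ring
    have hux : u t x = c0 * Complex.exp (k2*(x:ℂ)^2 + k1*(x:ℂ) + k0) := by
      have := congrFun hx_eq x; simpa using this
    have hderx : deriv (fun y : ℝ => u t y) x
        = c0 * Complex.exp (k2*(x:ℂ)^2 + k1*(x:ℂ) + k0) * (2*k2*(x:ℂ) + k1) := by
      rw [hx_eq, deriv_quadExp]
    have hderxx : deriv (deriv (fun y : ℝ => u t y)) x
        = c0 * Complex.exp (k2*(x:ℂ)^2 + k1*(x:ℂ) + k0) * ((2*k2*(x:ℂ)+k1)^2 + 2*k2) := by
      rw [hx_eq]; exact deriv2_quadExp c0 k2 k1 k0 x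
    -- time derivatives of the matrix entries
    have hm00 : m 0 0 = γ := by rw [hm]; simp
    have hm01 : m 0 1 = β := by rw [hm]; simp
    have hm10 : m 1 0 = -α := by rw [hm]; simp
    have hm11 : m 1 1 = -γ := by rw [hm]; simp
    have ea : (m * NormedSpace.exp (t • m)) 0 0 = γ * a + β * c := by
      rw [mul_exp_entries m t 0 0, hm00, hm01, haA, hcA]
    have eb : (m * NormedSpace.exp (t • m)) 0 1 = γ * bb + β * d := by
      rw [mul_exp_entries m t 0 1, hm00, hm01, hbA, hdA]
    have ec : (m * NormedSpace.exp (t • m)) 1 0 = -α * a + -γ * c := by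
      rw [mul_exp_entries m t 1 0, hm10, hm11, haA, hcA]
    have hDa : HasDerivAt (fun t' : ℝ => NormedSpace.exp (t' • m) 0 0) (γ * a + β * c) t := by
      have := hasDerivAt_exp_entry m t 0 0; rwa [ea] at this
    have hDb : HasDerivAt (fun t' : ℝ => NormedSpace.exp (t' • m) 0 1) (γ * bb + β * d) t := by
      have := hasDerivAt_exp_entry m t 0 1; rwa [eb] at this
    have hDc : HasDerivAt (fun t' : ℝ => NormedSpace.exp (t' • m) 1 0) (-α * a + -γ * c) t := by
      have := hasDerivAt_exp_entry m t 1 0; rwa [ec] at this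
    -- time derivative of the function
    have h1 : HasDerivAt (fun t' : ℝ => Real.sqrt (NormedSpace.exp (t' • m) 0 0))
        (1/(2*Real.sqrt a) * (γ * a + β * c)) t := by
      have := (Real.hasDerivAt_sqrt ha0.ne').comp t hDa
      exact this
    have h2 : HasDerivAt (fun t' : ℝ => (Real.sqrt (NormedSpace.exp (t' • m) 0 0))⁻¹)
        (-(1/(2*Real.sqrt a) * (γ * a + β * c)) / (Real.sqrt a)^2) t := h1.inv hsqne
    have h2c : HasDerivAt (fun t' : ℝ => (((Real.sqrt (NormedSpace.exp (t' • m) 0 0))⁻¹ : ℝ) : ℂ))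
        ((-(1/(2*Real.sqrt a) * (γ * a + β * c)) / (Real.sqrt a)^2 : ℝ) : ℂ) t := h2.ofReal_comp
    have hDaC : HasDerivAt (fun t' : ℝ => ((NormedSpace.exp (t' • m) 0 0 : ℝ) : ℂ))
        (((γ * a + β * c : ℝ)) : ℂ) t := hDa.ofReal_comp
    have hDbC : HasDerivAt (fun t' : ℝ => ((NormedSpace.exp (t' • m) 0 1 : ℝ) : ℂ))
        (((γ * bb + β * d : ℝ)) : ℂ) t := hDb.ofReal_comp
    have hDcC : HasDerivAt (fun t' : ℝ => ((NormedSpace.exp (t' • m) 1 0 : ℝ) : ℂ))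
        (((-α * a + -γ * c : ℝ)) : ℂ) t := hDc.ofReal_comp
    have hinv : HasDerivAt (fun t' : ℝ => (1:ℂ) / (2 * ((NormedSpace.exp (t' • m) 0 0 : ℝ) : ℂ)))
        (-(2 * ((γ * a + β * c : ℝ) : ℂ)) / (2*(a:ℂ))^2) t := by
      have h := (hasDerivAt_const t (1:ℂ)).div (hDaC.const_mul 2)
        (mul_ne_zero two_ne_zero hAne)
      refine h.congr_deriv ?_
      ring
    have hKd : HasDerivAt (fun t' : ℝ => (Complex.I / (hb:ℂ)) *
        ((1:ℂ) / (2 * ((NormedSpace.exp (t' • m) 0 0 : ℝ) : ℂ))))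
        ((Complex.I / (hb:ℂ)) * (-(2 * ((γ * a + β * c : ℝ) : ℂ)) / (2*(a:ℂ))^2)) t :=
      hinv.const_mul _
    have hP : HasDerivAt (fun t' : ℝ =>
        ((NormedSpace.exp (t' • m) 1 0 : ℝ) : ℂ) * (x:ℂ)^2 + 2*(x:ℂ)*(ξ:ℂ) -
          ((NormedSpace.exp (t' • m) 0 1 : ℝ) : ℂ) * (ξ:ℂ)^2)
        (((-α * a + -γ * c : ℝ) : ℂ) * (x:ℂ)^2 - ((γ * bb + β * d : ℝ) : ℂ) * (ξ:ℂ)^2) t :=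
      ((hDcC.mul_const _).add_const _).sub (hDbC.mul_const _)
    have hArg := hKd.mul hP
    have hExp := hArg.cexp
    have hFull := h2c.mul hExp
    have ht_eq : (fun t' : ℝ => u t' x) = (fun t' : ℝ =>
        (((Real.sqrt (NormedSpace.exp (t' • m) 0 0))⁻¹ : ℝ) : ℂ) *
        Complex.exp ((Complex.I / (hb : ℂ)) *
          ((1 : ℂ) / (2 * ((NormedSpace.exp (t' • m) 0 0 : ℝ) : ℂ))) *
          (((NormedSpace.exp (t' • m) 1 0 : ℝ) : ℂ) * (x : ℂ) ^ 2 +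
            2 * (x : ℂ) * (ξ : ℂ) -
            ((NormedSpace.exp (t' • m) 0 1 : ℝ) : ℂ) * (ξ : ℂ) ^ 2))) :=
      funext fun t' => hu t' x
    have hdert : deriv (fun t' : ℝ => u t' x) t =
        ((-(1/(2*Real.sqrt a) * (γ * a + β * c)) / (Real.sqrt a)^2 : ℝ) : ℂ) *
          Complex.exp ((Complex.I / (hb:ℂ)) * ((1:ℂ)/(2*(a:ℂ))) *
            ((c:ℂ)*(x:ℂ)^2 + 2*(x:ℂ)*(ξ:ℂ) - (bb:ℂ)*(ξ:ℂ)^2)) +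
        c0 * (Complex.exp ((Complex.I / (hb:ℂ)) * ((1:ℂ)/(2*(a:ℂ))) *
            ((c:ℂ)*(x:ℂ)^2 + 2*(x:ℂ)*(ξ:ℂ) - (bb:ℂ)*(ξ:ℂ)^2)) *
          ((Complex.I / (hb:ℂ)) * (-(2 * ((γ * a + β * c : ℝ) : ℂ)) / (2*(a:ℂ))^2) *
              ((c:ℂ)*(x:ℂ)^2 + 2*(x:ℂ)*(ξ:ℂ) - (bb:ℂ)*(ξ:ℂ)^2) +
            (Complex.I / (hb:ℂ)) * ((1:ℂ)/(2*(a:ℂ))) *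
              (((-α * a + -γ * c : ℝ) : ℂ) * (x:ℂ)^2 - ((γ * bb + β * d : ℝ) : ℂ) * (ξ:ℂ)^2))) := by
      rw [ht_eq]
      exact hFull.deriv
    -- determinant relation
    have hdet : a * d - bb * c = 1 := det_rel α β γ m hm t
    have hdetC : (a:ℂ) * (d:ℂ) - (bb:ℂ) * (c:ℂ) = 1 := by
      have := congrArg (fun y : ℝ => (y : ℂ)) hdet
      push_cast at this
      exact this
    have hsqA : (a:ℂ) = ((Real.sqrt a : ℝ) : ℂ)^2 := by
      rw [← Complex.ofReal_pow, Real.sq_sqrt ha0.le]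
    -- final algebra
    rw [hdert, hux, hderx, hderxx]
    have hEarg : (k2*(x:ℂ)^2 + k1*(x:ℂ) + k0) = (Complex.I/(hb:ℂ)) * ((1:ℂ)/(2*(a:ℂ))) *
        ((c:ℂ)*(x:ℂ)^2 + 2*(x:ℂ)*(ξ:ℂ) - (bb:ℂ)*(ξ:ℂ)^2) := by
      rw [hk2, hk1, hk0, hK]; ring
    rw [hEarg]
    rw [hk2, hk1, hK, hc0]
    have hdval : (d:ℂ) = (1 + (bb:ℂ)*(c:ℂ))/(a:ℂ) := by
      field_simp
      linear_combination hdetC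
    have hsqC : ((Real.sqrt a : ℝ) : ℂ) ≠ 0 := Complex.ofReal_ne_zero.mpr hsqne
    have hI2 : Complex.I^2 = -1 := Complex.I_sq
    have hI3 : Complex.I^3 = -Complex.I := by rw [pow_succ, hI2]; ring
    have hI4 : Complex.I^4 = 1 := by rw [pow_succ, hI3]; simp [Complex.I_mul_I]
    push_cast
    rw [hdval, hsqA]
    generalize Complex.exp _ = E
    have hs1 : (↑(Real.sqrt a) : ℂ) * ((↑(Real.sqrt a) : ℂ))⁻¹ = 1 := mul_inv_cancel₀ hsqC
    have hh1 : (↑hb : ℂ) * ((↑hb : ℂ))⁻¹ = 1 := mul_inv_cancel₀ hbC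
    have hJ : Complex.I^2 = -1 := Complex.I_sq
    linear_combination ((-1/2 : ℂ)*((↑(Real.sqrt a):ℂ))⁻¹*(↑hb:ℂ)*Complex.I*(↑γ:ℂ)*E + (-1/2 : ℂ)*((↑(Real.sqrt a):ℂ))⁻¹*(↑hb:ℂ)*((↑hb:ℂ))⁻¹*Complex.I^2*(↑x:ℂ)^2*(↑α:ℂ)*E + (-1 : ℂ)*((↑(Real.sqrt a):ℂ))⁻¹^3*(↑hb:ℂ)*((↑hb:ℂ))⁻¹*Complex.I^2*(↑x:ℂ)*(↑ξ:ℂ)*(↑γ:ℂ)*E + (1/2 : ℂ)*((↑(Real.sqrt a):ℂ))⁻¹^3*(↑hb:ℂ)*((↑hb:ℂ))⁻¹*Complex.I^2*(↑bb:ℂ)*(↑ξ:ℂ)^2*(↑γ:ℂ)*E + (-1/2 : ℂ)*((↑(Real.sqrt a):ℂ))⁻¹^3*(↑hb:ℂ)*((↑hb:ℂ))⁻¹*Complex.I^2*(↑c:ℂ)*(↑x:ℂ)^2*(↑γ:ℂ)*E + (-1/2 : ℂ)*(↑(Real.sqrt a):ℂ)*((↑(Real.sqrt a):ℂ))⁻¹^2*(↑hb:ℂ)*Complex.I*(↑γ:ℂ)*E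 + (-1/2 : ℂ)*(↑(Real.sqrt a):ℂ)*((↑(Real.sqrt a):ℂ))⁻¹^2*(↑hb:ℂ)*((↑hb:ℂ))⁻¹*Complex.I^2*(↑x:ℂ)^2*(↑α:ℂ)*E + (-1 : ℂ)*(↑(Real.sqrt a):ℂ)*((↑(Real.sqrt a):ℂ))⁻¹^4*(↑hb:ℂ)*((↑hb:ℂ))⁻¹*Complex.I^2*(↑x:ℂ)*(↑ξ:ℂ)*(↑γ:ℂ)*E + (1/2 : ℂ)*(↑(Real.sqrt a):ℂ)*((↑(Real.sqrt a):ℂ))⁻¹^4*(↑hb:ℂ)*((↑hb:ℂ))⁻¹*Complex.I^2*(↑bb:ℂ)*(↑ξ:ℂ)^2*(↑γ:ℂ)*E + (-1/2 : ℂ)*(↑(Real.sqrt a):ℂ)*((↑(Real.sqrt a):ℂ))⁻¹^4*(↑hb:ℂ)*((↑hb:ℂ))⁻¹*Complex.I^2*(↑c:ℂ)*(↑x:ℂ)^2*(↑γ:ℂ)*E) * hs1 + ((-1/2 : ℂ)*((↑(Real.sqrt a):ℂ))⁻¹*Complex.I^2*(↑x:ℂ)^2*(↑α:ℂ)*E +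 (1/2 : ℂ)*((↑(Real.sqrt a):ℂ))⁻¹^3*(↑hb:ℂ)*Complex.I*(↑c:ℂ)*(↑β:ℂ)*E + (1/2 : ℂ)*((↑(Real.sqrt a):ℂ))⁻¹^5*(↑hb:ℂ)*((↑hb:ℂ))⁻¹*Complex.I^2*(↑ξ:ℂ)^2*(↑β:ℂ)*E + ((↑(Real.sqrt a):ℂ))⁻¹^5*(↑hb:ℂ)*((↑hb:ℂ))⁻¹*Complex.I^2*(↑c:ℂ)*(↑x:ℂ)*(↑ξ:ℂ)*(↑β:ℂ)*E + (1/2 : ℂ)*((↑(Real.sqrt a):ℂ))⁻¹^5*(↑hb:ℂ)*((↑hb:ℂ))⁻¹*Complex.I^2*(↑c:ℂ)^2*(↑x:ℂ)^2*(↑β:ℂ)*E) * hh1 + ((-1/2 : ℂ)*((↑(Real.sqrt a):ℂ))⁻¹*(↑x:ℂ)^2*(↑α:ℂ)*E) * hJ
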